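/- Fix a fixed-design Cox partial likelihood with score U and information matrix J, and suppose the covariates are uniformly bounded: |z_i^j| ≤ K₁ for all i ∈ {1,…,n} and j ∈ {1,…,p}. Let β₀, β̂ ∈ ℝ^p and γ ≥ 0 be such that ‖U(β₀)‖_∞ ≤ γ, ‖U(β̂)‖_∞ ≤ γ, and ‖β̂‖₁ ≤ ‖β₀‖₁. Then, with h := β̂ − β₀, h ᵀJ(β₀)h ≤ 4γ‖β₀‖₁ exp(4K₁‖β₀‖₁). -/

import Mathlib

set_option maxHeartbeats 1000000


open Matrix Finset

noncomputable def l1 {p : ℕ} (h : Fin p → ℝ) : ℝ := ∑ j, |h j|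
noncomputable def l2 {p : ℕ} (h : Fin p → ℝ) : ℝ := Real.sqrt (∑ j, (h j) ^ 2)
noncomputable def lqNorm {p : ℕ} (q : ℝ) (h : Fin p → ℝ) : ℝ := (∑ j, |h j| ^ q) ^ (1 / q)
noncomputable def linf {p : ℕ} (h : Fin p → ℝ) : ℝ := ⨆ j, |h j|
def restr {p : ℕ} (T : Finset (Fin p)) (h : Fin p → ℝ) : Fin p → ℝ :=
  fun j => if j ∈ T then h j else 0
def coneC {p : ℕ} (T : Finset (Fin p)) (h : Fin p → ℝ) : Prop :=
  l1 (restr Tᶜ h) ≤ l1 (restr T h)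
noncomputable def quad {p : ℕ} (M : Matrix (Fin p) (Fin p) ℝ) (h : Fin p → ℝ) : ℝ :=
  h ⬝ᵥ M.mulVec h

/-- `S⁰_i(β) = Σ_{k ∈ R_i} exp(z_kᵀβ)` for the fixed-design Cox partial likelihood. -/
noncomputable def coxS0 {n p : ℕ} (z : Fin n → Fin p → ℝ) (R : Fin n → Finset (Fin n))
    (i : Fin n) (β : Fin p → ℝ) : ℝ :=
  ∑ k ∈ R i, Real.exp (z k ⬝ᵥ β)

/-- The score `U(β) = (1/n) Σ_{i ∈ D} (z_i − S¹_i(β)/S⁰_i(β))`. -/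
noncomputable def coxU {n p : ℕ} (z : Fin n → Fin p → ℝ) (D : Finset (Fin n))
    (R : Fin n → Finset (Fin n)) (β : Fin p → ℝ) : Fin p → ℝ :=
  fun j => (n : ℝ)⁻¹ *
    ∑ i ∈ D, (z i j - (∑ k ∈ R i, Real.exp (z k ⬝ᵥ β) * z k j) / coxS0 z R i β)

/-- The information matrix
`J(β) = (1/n) Σ_{i ∈ D} (S²_i(β)/S⁰_i(β) − (S¹_i(β)/S⁰_i(β))(S¹_i(β)/S⁰_i(β))ᵀ)`. -/
noncomputable def coxJ {n p : ℕ} (z : Fin n → Fin p → ℝ) (D : Finset (Fin n))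
    (R : Fin n → Finset (Fin n)) (β : Fin p → ℝ) : Matrix (Fin p) (Fin p) ℝ :=
  fun a b => (n : ℝ)⁻¹ *
    ∑ i ∈ D,
      ((∑ k ∈ R i, Real.exp (z k ⬝ᵥ β) * z k a * z k b) / coxS0 z R i β -
        ((∑ k ∈ R i, Real.exp (z k ⬝ᵥ β) * z k a) / coxS0 z R i β) *
          ((∑ k ∈ R i, Real.exp (z k ⬝ᵥ β) * z k b) / coxS0 z R i β))


lemma exp_sub_mul_sub {M x y : ℝ} (hx : -M ≤ x) (hy : -M ≤ y) (hxy : y ≤ x) :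
    (x - y) ^ 2 ≤ Real.exp M * ((Real.exp x - Real.exp y) * (x - y)) := by
  have h1 : Real.exp y * (x - y) ≤ Real.exp x - Real.exp y := by
    have := mul_le_mul_of_nonneg_left (Real.add_one_le_exp (x - y)) (Real.exp_pos y).le
    rw [← Real.exp_add] at this
    have hxy2 : y + (x - y) = x := by ring
    rw [hxy2] at this
    nlinarith
  have h2 : Real.exp (-M) ≤ Real.exp y := Real.exp_le_exp.2 hy
  have h3 : Real.exp M * Real.exp (-M) = 1 := by
    rw [← Real.exp_add]; simp
  have h4 : 1 ≤ Real.exp M * Real.exp y := by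
    nlinarith [mul_le_mul_of_nonneg_left h2 (Real.exp_pos M).le]
  have h5 : Real.exp y * ((x - y) * (x - y)) ≤ (Real.exp x - Real.exp y) * (x - y) :=
    by nlinarith [mul_le_mul_of_nonneg_right h1 (sub_nonneg.2 hxy)]
  nlinarith [mul_le_mul_of_nonneg_left h5 (Real.exp_pos M).le,
    mul_le_mul_of_nonneg_right h4 (sq_nonneg (x - y))]

lemma exp_sub_mul_sub' {M x y : ℝ} (hx : -M ≤ x) (hy : -M ≤ y) :
    (x - y) ^ 2 ≤ Real.exp M * ((Real.exp x - Real.exp y) * (x - y)) := by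
  rcases le_total y x with h | h
  · exact exp_sub_mul_sub hx hy h
  · have := exp_sub_mul_sub hy hx h
    nlinarith [this]

lemma sum_sym {ι : Type*} (s : Finset ι) (f : ι → ι → ℝ) :
    2 * ∑ k ∈ s, ∑ l ∈ s, f k l = ∑ k ∈ s, ∑ l ∈ s, (f k l + f l k) := by
  simp only [Finset.sum_add_distrib]
  rw [Finset.sum_comm (f := fun k l => f l k)]
  ring

lemma key_ineq {ι : Type*} (s : Finset ι) (hs : s.Nonempty)
    (a b v : ι → ℝ) (M : ℝ) (hb : ∀ k ∈ s, b k = a k + v k)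
    (hv : ∀ k ∈ s, |v k| ≤ M) :
    (∑ k ∈ s, Real.exp (a k) * v k ^ 2) / (∑ k ∈ s, Real.exp (a k)) -
      ((∑ k ∈ s, Real.exp (a k) * v k) / (∑ k ∈ s, Real.exp (a k))) ^ 2 ≤
    Real.exp (2 * M) *
      ((∑ k ∈ s, Real.exp (b k) * v k) / (∑ k ∈ s, Real.exp (b k)) -
        (∑ k ∈ s, Real.exp (a k) * v k) / (∑ k ∈ s, Real.exp (a k))) := by
  set A := ∑ k ∈ s, Real.exp (a k) with hA_def
  set B := ∑ k ∈ s, Real.exp (b k) with hB_def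
  set S1 := ∑ k ∈ s, Real.exp (a k) * v k with hS1_def
  set S2 := ∑ k ∈ s, Real.exp (a k) * v k ^ 2 with hS2_def
  set T := ∑ k ∈ s, Real.exp (b k) * v k with hT_def
  have hA : 0 < A := Finset.sum_pos (fun k _ => Real.exp_pos _) hs
  have hB : 0 < B := Finset.sum_pos (fun k _ => Real.exp_pos _) hs
  -- double sum identities
  have e1 : A * S2 = ∑ k ∈ s, ∑ l ∈ s, Real.exp (a k) * (Real.exp (a l) * v l ^ 2) :=
    Finset.sum_mul_sum s s _ _
  have e2 : S1 ^ 2 = ∑ k ∈ s, ∑ l ∈ s, (Real.exp (a k) * v k) * (Real.exp (a l) * v l) := by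
    rw [sq]; exact Finset.sum_mul_sum s s _ _
  have e3 : A * T = ∑ k ∈ s, ∑ l ∈ s, Real.exp (a k) * (Real.exp (b l) * v l) :=
    Finset.sum_mul_sum s s _ _
  have e4 : B * S1 = ∑ k ∈ s, ∑ l ∈ s, Real.exp (b k) * (Real.exp (a l) * v l) :=
    Finset.sum_mul_sum s s _ _
  have lin1 : A * S2 - S1 ^ 2 = ∑ k ∈ s, ∑ l ∈ s,
      (Real.exp (a k) * (Real.exp (a l) * v l ^ 2)
        - (Real.exp (a k) * v k) * (Real.exp (a l) * v l)) := by
    rw [e1, e2, ← Finset.sum_sub_distrib]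
    exact Finset.sum_congr rfl fun k _ => (Finset.sum_sub_distrib _ _).symm
  have lin2 : A * T - B * S1 = ∑ k ∈ s, ∑ l ∈ s,
      (Real.exp (a k) * (Real.exp (b l) * v l)
        - Real.exp (b k) * (Real.exp (a l) * v l)) := by
    rw [e3, e4, ← Finset.sum_sub_distrib]
    exact Finset.sum_congr rfl fun k _ => (Finset.sum_sub_distrib _ _).symm
  have id1 : 2 * (A * S2 - S1 ^ 2) = ∑ k ∈ s, ∑ l ∈ s,
      Real.exp (a k) * Real.exp (a l) * (v k - v l) ^ 2 := by
    rw [lin1, sum_sym]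
    refine Finset.sum_congr rfl fun k _ => Finset.sum_congr rfl fun l _ => by ring
  have id2 : 2 * (A * T - B * S1) = ∑ k ∈ s, ∑ l ∈ s,
      Real.exp (a k) * Real.exp (a l) *
        ((Real.exp (v k) - Real.exp (v l)) * (v k - v l)) := by
    rw [lin2, sum_sym]
    refine Finset.sum_congr rfl fun k hk => Finset.sum_congr rfl fun l hl => ?_
    rw [hb k hk, hb l hl, Real.exp_add, Real.exp_add]
    ring
  have hdnn : (0:ℝ) ≤ ∑ k ∈ s, ∑ l ∈ s,
      Real.exp (a k) * Real.exp (a l) * (v k - v l) ^ 2 :=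
    Finset.sum_nonneg fun k _ => Finset.sum_nonneg fun l _ => by positivity
  have hX0 : 0 ≤ A * S2 - S1 ^ 2 := by linarith [id1, hdnn]
  have hXY : A * S2 - S1 ^ 2 ≤ Real.exp M * (A * T - B * S1) := by
    have hsum : ∑ k ∈ s, ∑ l ∈ s, Real.exp (a k) * Real.exp (a l) * (v k - v l) ^ 2
        ≤ ∑ k ∈ s, ∑ l ∈ s, Real.exp M * (Real.exp (a k) * Real.exp (a l) *
          ((Real.exp (v k) - Real.exp (v l)) * (v k - v l))) := by
      refine Finset.sum_le_sum fun k hk => Finset.sum_le_sum fun l hl => ?_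
      have hvk := abs_le.mp (hv k hk)
      have hvl := abs_le.mp (hv l hl)
      have := exp_sub_mul_sub' (M := M) hvk.1 hvl.1
      have hnn : (0:ℝ) ≤ Real.exp (a k) * Real.exp (a l) := by positivity
      calc Real.exp (a k) * Real.exp (a l) * (v k - v l) ^ 2
          ≤ Real.exp (a k) * Real.exp (a l) *
            (Real.exp M * ((Real.exp (v k) - Real.exp (v l)) * (v k - v l))) :=
            mul_le_mul_of_nonneg_left this hnn
        _ = _ := by ring
    have hpull : Real.exp M * (2 * (A * T - B * S1)) = ∑ k ∈ s, ∑ l ∈ s,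
        Real.exp M * (Real.exp (a k) * Real.exp (a l) *
          ((Real.exp (v k) - Real.exp (v l)) * (v k - v l))) := by
      rw [id2, Finset.mul_sum]
      exact Finset.sum_congr rfl fun k _ => Finset.mul_sum _ _ _
    nlinarith [id1, hsum, hpull]
  have hBA : B ≤ Real.exp M * A := by
    rw [hB_def, hA_def, Finset.mul_sum]
    refine Finset.sum_le_sum fun k hk => ?_
    rw [hb k hk, Real.exp_add]
    have := (abs_le.mp (hv k hk)).2
    have := Real.exp_le_exp.2 this
    nlinarith [Real.exp_pos (a k)]
  have lhs_eq : S2 / A - (S1 / A) ^ 2 = (A * S2 - S1 ^ 2) / A ^ 2 := by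
    field_simp
  have rhs_eq : T / B - S1 / A = (A * T - B * S1) / (A * B) := by
    field_simp
  have hexp2 : Real.exp (2 * M) = Real.exp M * Real.exp M := by
    rw [two_mul, Real.exp_add]
  rw [lhs_eq, rhs_eq, ← mul_div_assoc,
    div_le_div_iff₀ (by positivity) (by positivity), hexp2]
  nlinarith [mul_le_mul_of_nonneg_left hBA (mul_nonneg hX0 hA.le),
    mul_le_mul_of_nonneg_right hXY
      (by positivity : (0:ℝ) ≤ Real.exp M * (A * A))]

lemma push1 {n p : ℕ} (s : Finset (Fin n)) (w : Fin n → ℝ) (z : Fin n → Fin p → ℝ)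
    (h : Fin p → ℝ) :
    ∑ a, h a * (∑ k ∈ s, w k * z k a) = ∑ k ∈ s, w k * (∑ j, z k j * h j) := by
  simp only [Finset.mul_sum]
  rw [Finset.sum_comm]
  exact Finset.sum_congr rfl fun k _ => Finset.sum_congr rfl fun j _ => by ring

lemma push2 {n p : ℕ} (s : Finset (Fin n)) (w : Fin n → ℝ) (z : Fin n → Fin p → ℝ)
    (h : Fin p → ℝ) :
    ∑ a, ∑ b, h a * h b * (∑ k ∈ s, w k * z k a * z k b)
      = ∑ k ∈ s, w k * (∑ j, z k j * h j) ^ 2 := by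
  have step : ∀ k, w k * (∑ j, z k j * h j) ^ 2
      = ∑ a, ∑ b, h a * h b * (w k * z k a * z k b) := by
    intro k
    rw [sq, Finset.sum_mul_sum, Finset.mul_sum]
    refine Finset.sum_congr rfl fun a _ => ?_
    rw [Finset.mul_sum]
    exact Finset.sum_congr rfl fun b _ => by ring
  calc ∑ a, ∑ b, h a * h b * (∑ k ∈ s, w k * z k a * z k b)
      = ∑ a, ∑ b, ∑ k ∈ s, h a * h b * (w k * z k a * z k b) := by
        refine Finset.sum_congr rfl fun a _ => Finset.sum_congr rfl fun b _ => ?_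
        rw [Finset.mul_sum]
    _ = ∑ a, ∑ k ∈ s, ∑ b, h a * h b * (w k * z k a * z k b) :=
        Finset.sum_congr rfl fun a _ => Finset.sum_comm
    _ = ∑ k ∈ s, ∑ a, ∑ b, h a * h b * (w k * z k a * z k b) := Finset.sum_comm
    _ = ∑ k ∈ s, w k * (∑ j, z k j * h j) ^ 2 :=
        Finset.sum_congr rfl fun k _ => (step k).symm

lemma per_i {n p : ℕ} (s : Finset (Fin n)) (w : Fin n → ℝ) (A : ℝ)
    (z : Fin n → Fin p → ℝ) (h : Fin p → ℝ) :
    ∑ a, ∑ b, h a * h b *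
      ((∑ k ∈ s, w k * z k a * z k b) / A -
        (∑ k ∈ s, w k * z k a) / A * ((∑ k ∈ s, w k * z k b) / A))
    = (∑ k ∈ s, w k * (∑ j, z k j * h j) ^ 2) / A -
      ((∑ k ∈ s, w k * (∑ j, z k j * h j)) / A) ^ 2 := by
  have t1 : ∀ a b : Fin p, h a * h b *
      ((∑ k ∈ s, w k * z k a * z k b) / A -
        (∑ k ∈ s, w k * z k a) / A * ((∑ k ∈ s, w k * z k b) / A))
      = (h a * h b * (∑ k ∈ s, w k * z k a * z k b)) / A
        - (h a * ((∑ k ∈ s, w k * z k a) / A)) *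
            (h b * ((∑ k ∈ s, w k * z k b) / A)) := by
    intro a b; ring
  simp only [t1, Finset.sum_sub_distrib]
  have t2 : ∑ a, ∑ b, (h a * h b * (∑ k ∈ s, w k * z k a * z k b)) / A
      = (∑ k ∈ s, w k * (∑ j, z k j * h j) ^ 2) / A := by
    simp only [← Finset.sum_div]
    rw [push2]
  have t3 : ∑ a, ∑ b, (h a * ((∑ k ∈ s, w k * z k a) / A)) *
      (h b * ((∑ k ∈ s, w k * z k b) / A))
      = ((∑ k ∈ s, w k * (∑ j, z k j * h j)) / A) ^ 2 := by
    rw [← Finset.sum_mul_sum]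
    rw [sq]
    congr 1 <;>
    · simp only [← mul_div_assoc, ← Finset.sum_div]
      rw [push1]
  rw [t2, t3]

lemma quad_coxJ {n p : ℕ} (z : Fin n → Fin p → ℝ) (D : Finset (Fin n))
    (R : Fin n → Finset (Fin n)) (β : Fin p → ℝ) (h : Fin p → ℝ) :
    quad (coxJ z D R β) h = (n:ℝ)⁻¹ * ∑ i ∈ D,
      ((∑ k ∈ R i, Real.exp (z k ⬝ᵥ β) * (∑ j, z k j * h j) ^ 2) / coxS0 z R i β -
        ((∑ k ∈ R i, Real.exp (z k ⬝ᵥ β) * (∑ j, z k j * h j)) / coxS0 z R i β) ^ 2) := by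
  have quad_eq : quad (coxJ z D R β) h = ∑ a, ∑ b, h a * h b * coxJ z D R β a b := by
    unfold quad Matrix.mulVec dotProduct
    refine Finset.sum_congr rfl fun a _ => ?_
    rw [Finset.mul_sum]
    exact Finset.sum_congr rfl fun b _ => by ring
  rw [quad_eq]
  simp only [coxJ]
  calc ∑ a, ∑ b, h a * h b * ((n:ℝ)⁻¹ * ∑ i ∈ D,
        ((∑ k ∈ R i, Real.exp (z k ⬝ᵥ β) * z k a * z k b) / coxS0 z R i β -
          (∑ k ∈ R i, Real.exp (z k ⬝ᵥ β) * z k a) / coxS0 z R i β *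
            ((∑ k ∈ R i, Real.exp (z k ⬝ᵥ β) * z k b) / coxS0 z R i β)))
      = ∑ a, ∑ b, ∑ i ∈ D, (n:ℝ)⁻¹ * (h a * h b *
        ((∑ k ∈ R i, Real.exp (z k ⬝ᵥ β) * z k a * z k b) / coxS0 z R i β -
          (∑ k ∈ R i, Real.exp (z k ⬝ᵥ β) * z k a) / coxS0 z R i β *
            ((∑ k ∈ R i, Real.exp (z k ⬝ᵥ β) * z k b) / coxS0 z R i β))) := by
        refine Finset.sum_congr rfl fun a _ => Finset.sum_congr rfl fun b _ => ?_
        rw [Finset.mul_sum, Finset.mul_sum]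
        exact Finset.sum_congr rfl fun i _ => by ring
    _ = ∑ a, ∑ i ∈ D, ∑ b, (n:ℝ)⁻¹ * (h a * h b *
        ((∑ k ∈ R i, Real.exp (z k ⬝ᵥ β) * z k a * z k b) / coxS0 z R i β -
          (∑ k ∈ R i, Real.exp (z k ⬝ᵥ β) * z k a) / coxS0 z R i β *
            ((∑ k ∈ R i, Real.exp (z k ⬝ᵥ β) * z k b) / coxS0 z R i β))) :=
        Finset.sum_congr rfl fun a _ => Finset.sum_comm
    _ = ∑ i ∈ D, ∑ a, ∑ b, (n:ℝ)⁻¹ * (h a * h b *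
        ((∑ k ∈ R i, Real.exp (z k ⬝ᵥ β) * z k a * z k b) / coxS0 z R i β -
          (∑ k ∈ R i, Real.exp (z k ⬝ᵥ β) * z k a) / coxS0 z R i β *
            ((∑ k ∈ R i, Real.exp (z k ⬝ᵥ β) * z k b) / coxS0 z R i β))) := Finset.sum_comm
    _ = ∑ i ∈ D, (n:ℝ)⁻¹ * ∑ a, ∑ b, (h a * h b *
        ((∑ k ∈ R i, Real.exp (z k ⬝ᵥ β) * z k a * z k b) / coxS0 z R i β -
          (∑ k ∈ R i, Real.exp (z k ⬝ᵥ β) * z k a) / coxS0 z R i β *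
            ((∑ k ∈ R i, Real.exp (z k ⬝ᵥ β) * z k b) / coxS0 z R i β))) := by
        refine Finset.sum_congr rfl fun i _ => ?_
        rw [Finset.mul_sum]
        exact Finset.sum_congr rfl fun a _ => (Finset.mul_sum _ _ _).symm
    _ = ∑ i ∈ D, (n:ℝ)⁻¹ *
        ((∑ k ∈ R i, Real.exp (z k ⬝ᵥ β) * (∑ j, z k j * h j) ^ 2) / coxS0 z R i β -
          ((∑ k ∈ R i, Real.exp (z k ⬝ᵥ β) * (∑ j, z k j * h j)) / coxS0 z R i β) ^ 2) := by
        refine Finset.sum_congr rfl fun i _ => ?_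
        rw [per_i]
    _ = _ := (Finset.mul_sum _ _ _).symm


lemma score_sum {n p : ℕ} (z : Fin n → Fin p → ℝ) (D : Finset (Fin n))
    (R : Fin n → Finset (Fin n)) (β β' : Fin p → ℝ) (h : Fin p → ℝ) :
    ∑ j, h j * (coxU z D R β j - coxU z D R β' j)
      = (n:ℝ)⁻¹ * ∑ i ∈ D,
        ((∑ k ∈ R i, Real.exp (z k ⬝ᵥ β') * (∑ j, z k j * h j)) / coxS0 z R i β'
          - (∑ k ∈ R i, Real.exp (z k ⬝ᵥ β) * (∑ j, z k j * h j)) / coxS0 z R i β) := by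
  simp only [coxU]
  calc ∑ j, h j * ((n:ℝ)⁻¹ *
        ∑ i ∈ D, (z i j - (∑ k ∈ R i, Real.exp (z k ⬝ᵥ β) * z k j) / coxS0 z R i β)
        - (n:ℝ)⁻¹ *
        ∑ i ∈ D, (z i j - (∑ k ∈ R i, Real.exp (z k ⬝ᵥ β') * z k j) / coxS0 z R i β'))
      = ∑ j, ∑ i ∈ D, (n:ℝ)⁻¹ *
          (h j * ((∑ k ∈ R i, Real.exp (z k ⬝ᵥ β') * z k j) / coxS0 z R i β'
            - (∑ k ∈ R i, Real.exp (z k ⬝ᵥ β) * z k j) / coxS0 z R i β)) := by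
        refine Finset.sum_congr rfl fun j _ => ?_
        rw [← mul_sub, ← Finset.sum_sub_distrib, Finset.mul_sum, Finset.mul_sum]
        exact Finset.sum_congr rfl fun i _ => by ring
    _ = ∑ i ∈ D, ∑ j, (n:ℝ)⁻¹ *
          (h j * ((∑ k ∈ R i, Real.exp (z k ⬝ᵥ β') * z k j) / coxS0 z R i β'
            - (∑ k ∈ R i, Real.exp (z k ⬝ᵥ β) * z k j) / coxS0 z R i β)) :=
        Finset.sum_comm
    _ = ∑ i ∈ D, (n:ℝ)⁻¹ *
          ((∑ k ∈ R i, Real.exp (z k ⬝ᵥ β') * (∑ j, z k j * h j)) / coxS0 z R i β'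
            - (∑ k ∈ R i, Real.exp (z k ⬝ᵥ β) * (∑ j, z k j * h j)) / coxS0 z R i β) := by
        refine Finset.sum_congr rfl fun i _ => ?_
        rw [← Finset.mul_sum]
        congr 1
        have expand : ∀ j : Fin p, h j *
            ((∑ k ∈ R i, Real.exp (z k ⬝ᵥ β') * z k j) / coxS0 z R i β'
              - (∑ k ∈ R i, Real.exp (z k ⬝ᵥ β) * z k j) / coxS0 z R i β)
            = h j * (∑ k ∈ R i, Real.exp (z k ⬝ᵥ β') * z k j) / coxS0 z R i β'
              - h j * (∑ k ∈ R i, Real.exp (z k ⬝ᵥ β) * z k j) / coxS0 z R i β := by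
          intro j; ring
        simp only [expand, Finset.sum_sub_distrib]
        congr 1 <;>
        · simp only [← Finset.sum_div]
          rw [push1]
    _ = _ := (Finset.mul_sum _ _ _).symm

/-- If `‖U(β₀)‖_∞ ≤ γ`, `‖U(β̂)‖_∞ ≤ γ` and `‖β̂‖₁ ≤ ‖β₀‖₁`, then with
`h = β̂ − β₀` one has `hᵀJ(β₀)h ≤ 4γ‖β₀‖₁ exp(4K₁‖β₀‖₁)`. -/
theorem stmt7 {n p : ℕ} (z : Fin n → Fin p → ℝ) (D : Finset (Fin n))
    (R : Fin n → Finset (Fin n)) (hR : ∀ i ∈ D, (R i).Nonempty)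
    (K₁ : ℝ) (hz : ∀ i j, |z i j| ≤ K₁)
    (β₀ βhat : Fin p → ℝ) (γ : ℝ) (hγ : 0 ≤ γ)
    (hU0 : linf (coxU z D R β₀) ≤ γ) (hUhat : linf (coxU z D R βhat) ≤ γ)
    (hl1 : l1 βhat ≤ l1 β₀) :
    quad (coxJ z D R β₀) (βhat - β₀) ≤ 4 * γ * l1 β₀ * Real.exp (4 * K₁ * l1 β₀) := by
  rcases Nat.eq_zero_or_pos p with hp | hp
  · subst hp
    have h1 : quad (coxJ z D R β₀) (βhat - β₀) = 0 := by
      simp [quad, dotProduct]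
    have h2 : l1 β₀ = 0 := by simp [l1]
    rw [h1, h2]
    simp
  rcases Nat.eq_zero_or_pos n with hn | hn
  · subst hn
    have hD : D = ∅ := Finset.eq_empty_of_forall_notMem fun i _ => i.elim0
    have h1 : quad (coxJ z D R β₀) (βhat - β₀) = 0 := by
      simp [quad, coxJ, hD, dotProduct, Matrix.mulVec]
    rw [h1]
    have h0 : 0 ≤ l1 β₀ := Finset.sum_nonneg fun j _ => abs_nonneg _
    have := Real.exp_pos (4 * K₁ * l1 β₀)
    exact mul_nonneg (mul_nonneg (mul_nonneg (by norm_num) hγ) h0) this.le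
  have hK : 0 ≤ K₁ := le_trans (abs_nonneg _) (hz ⟨0, hn⟩ ⟨0, hp⟩)
  set hh := βhat - β₀ with hhdef
  have hl1nn : 0 ≤ l1 hh := Finset.sum_nonneg fun j _ => abs_nonneg _
  have hβ0nn : 0 ≤ l1 β₀ := Finset.sum_nonneg fun j _ => abs_nonneg _
  have hl1hat : 0 ≤ l1 βhat := Finset.sum_nonneg fun j _ => abs_nonneg _
  have hl1h : l1 hh ≤ 2 * l1 β₀ := by
    have htri : l1 hh ≤ l1 βhat + l1 β₀ := by
      simp only [l1, ← Finset.sum_add_distrib]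
      refine Finset.sum_le_sum fun j _ => ?_
      have hje : hh j = βhat j - β₀ j := rfl
      rw [hje]
      exact abs_sub _ _
    linarith
  set M := K₁ * l1 hh with hMdef
  have hM : 0 ≤ M := mul_nonneg hK hl1nn
  have hvb : ∀ k, |∑ j, z k j * hh j| ≤ M := by
    intro k
    calc |∑ j, z k j * hh j| ≤ ∑ j, |z k j * hh j| :=
          Finset.abs_sum_le_sum_abs _ _
      _ ≤ ∑ j, K₁ * |hh j| := Finset.sum_le_sum fun j _ => by
          rw [abs_mul]
          exact mul_le_mul_of_nonneg_right (hz k j) (abs_nonneg _)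
      _ = M := by rw [hMdef, l1, Finset.mul_sum]
  have hav : ∀ k : Fin n, z k ⬝ᵥ βhat = z k ⬝ᵥ β₀ + ∑ j, z k j * hh j := by
    intro k
    simp only [dotProduct]
    rw [← Finset.sum_add_distrib]
    refine Finset.sum_congr rfl fun j _ => ?_
    have hje : hh j = βhat j - β₀ j := rfl
    rw [hje]; ring
  have hkey : ∀ i ∈ D,
      (∑ k ∈ R i, Real.exp (z k ⬝ᵥ β₀) * (∑ j, z k j * hh j) ^ 2) / coxS0 z R i β₀ -
        ((∑ k ∈ R i, Real.exp (z k ⬝ᵥ β₀) * (∑ j, z k j * hh j)) / coxS0 z R i β₀) ^ 2 ≤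
      Real.exp (2 * M) *
        ((∑ k ∈ R i, Real.exp (z k ⬝ᵥ βhat) * (∑ j, z k j * hh j)) / coxS0 z R i βhat -
          (∑ k ∈ R i, Real.exp (z k ⬝ᵥ β₀) * (∑ j, z k j * hh j)) / coxS0 z R i β₀) := by
    intro i hi
    have := key_ineq (R i) (hR i hi) (fun k => z k ⬝ᵥ β₀) (fun k => z k ⬝ᵥ βhat)
      (fun k => ∑ j, z k j * hh j) M (fun k _ => hav k) (fun k _ => hvb k)
    simpa [coxS0] using this
  have hSU := score_sum z D R β₀ βhat hh
  simp only [linf] at hU0 hUhat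
  have hSUle : ∑ j, hh j * (coxU z D R β₀ j - coxU z D R βhat j) ≤ 2 * γ * l1 hh := by
    calc ∑ j, hh j * (coxU z D R β₀ j - coxU z D R βhat j)
        ≤ ∑ j, |hh j| * (γ + γ) := by
          refine Finset.sum_le_sum fun j _ => ?_
          have h1 : |coxU z D R β₀ j| ≤ γ :=
            le_trans (le_ciSup (f := fun j => |coxU z D R β₀ j|)
              (Finite.bddAbove_range _) j) hU0
          have h2 : |coxU z D R βhat j| ≤ γ :=
            le_trans (le_ciSup (f := fun j => |coxU z D R βhat j|)
              (Finite.bddAbove_range _) j) hUhat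
          calc hh j * (coxU z D R β₀ j - coxU z D R βhat j)
              ≤ |hh j * (coxU z D R β₀ j - coxU z D R βhat j)| := le_abs_self _
            _ = |hh j| * |coxU z D R β₀ j - coxU z D R βhat j| := abs_mul _ _
            _ ≤ |hh j| * (γ + γ) := mul_le_mul_of_nonneg_left
                (le_trans (abs_sub _ _) (add_le_add h1 h2)) (abs_nonneg _)
      _ = 2 * γ * l1 hh := by
          rw [← Finset.sum_mul, l1]; ring
  rw [quad_coxJ]
  calc (n:ℝ)⁻¹ * ∑ i ∈ D,
        ((∑ k ∈ R i, Real.exp (z k ⬝ᵥ β₀) * (∑ j, z k j * hh j) ^ 2) / coxS0 z R i β₀ -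
          ((∑ k ∈ R i, Real.exp (z k ⬝ᵥ β₀) * (∑ j, z k j * hh j)) / coxS0 z R i β₀) ^ 2)
      ≤ (n:ℝ)⁻¹ * ∑ i ∈ D, Real.exp (2 * M) *
        ((∑ k ∈ R i, Real.exp (z k ⬝ᵥ βhat) * (∑ j, z k j * hh j)) / coxS0 z R i βhat -
          (∑ k ∈ R i, Real.exp (z k ⬝ᵥ β₀) * (∑ j, z k j * hh j)) / coxS0 z R i β₀) :=
        mul_le_mul_of_nonneg_left (Finset.sum_le_sum hkey) (by positivity)
    _ = Real.exp (2 * M) * ((n:ℝ)⁻¹ * ∑ i ∈ D,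
        ((∑ k ∈ R i, Real.exp (z k ⬝ᵥ βhat) * (∑ j, z k j * hh j)) / coxS0 z R i βhat -
          (∑ k ∈ R i, Real.exp (z k ⬝ᵥ β₀) * (∑ j, z k j * hh j)) / coxS0 z R i β₀)) := by
        rw [← Finset.mul_sum]; ring
    _ = Real.exp (2 * M) * ∑ j, hh j * (coxU z D R β₀ j - coxU z D R βhat j) := by
        rw [hSU]
    _ ≤ Real.exp (2 * M) * (2 * γ * l1 hh) :=
        mul_le_mul_of_nonneg_left hSUle (Real.exp_pos _).le
    _ ≤ Real.exp (4 * K₁ * l1 β₀) * (4 * γ * l1 β₀) := by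
        refine mul_le_mul (Real.exp_le_exp.2 ?_) (by nlinarith) (by positivity)
          (Real.exp_pos _).le
        rw [hMdef]; nlinarith
    _ = 4 * γ * l1 β₀ * Real.exp (4 * K₁ * l1 β₀) := by ring
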